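/- For every integer d ≥ 4 there is a unique nonnegative integer r with 3·2^r + r + 1 ≤ d ≤ 3·2^{r+1} + r + 1, and for this r one has b(d) = d²/2 − d(2r+3)/2 + 6·2^r + (r+1)(r+2)/2. -/

import Mathlib

def aSeq (n : ℕ) : ℕ :=
  n + 1 - ((Finset.range n).filter (fun r => 3 * 2 ^ r + r ≤ n)).card

def bFun (d : ℕ) : ℕ := 4 + ∑ i ∈ Finset.Icc 1 (d - 2), aSeq i

lemma mono3 {r s : ℕ} (h : r ≤ s) : 3 * 2 ^ r + r ≤ 3 * 2 ^ s + s := by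
  have := Nat.pow_le_pow_right (by norm_num : 1 ≤ 2) h
  omega

lemma aSeq_eq (r n : ℕ) (h1 : 3 * 2 ^ r + r ≤ n) (h2 : n < 3 * 2 ^ (r + 1) + r + 1) :
    aSeq n + (r + 1) = n + 1 := by
  have hcard : ((Finset.range n).filter (fun s => 3 * 2 ^ s + s ≤ n)).card = r + 1 := by
    have hset : (Finset.range n).filter (fun s => 3 * 2 ^ s + s ≤ n) = Finset.range (r + 1) := by
      ext s
      simp only [Finset.mem_filter, Finset.mem_range]
      constructor
      · rintro ⟨-, hs⟩
        by_contra hc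
        push_neg at hc
        have := mono3 (show r + 1 ≤ s from hc)
        omega
      · intro hs
        have h3 := mono3 (show s ≤ r from Nat.lt_succ_iff.mp hs)
        have h4 : 1 ≤ 2 ^ s := Nat.one_le_two_pow
        omega
    rw [hset, Finset.card_range]
  have h4 : 1 ≤ 2 ^ r := Nat.one_le_two_pow
  unfold aSeq
  rw [hcard]
  omega

lemma bFun_succ (e : ℕ) : bFun (e + 3) = bFun (e + 2) + aSeq (e + 1) := by
  unfold bFun
  rw [show e + 3 - 2 = e + 1 from rfl, show e + 2 - 2 = e from rfl,
    Finset.sum_Icc_succ_top (by omega : 1 ≤ e + 1)]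
  ring

lemma key (e : ℕ) : ∀ r : ℕ, 3 * 2 ^ r + r + 1 ≤ e + 4 → e + 4 ≤ 3 * 2 ^ (r + 1) + r + 1 →
    (bFun (e + 4) : ℚ) = ((e + 4 : ℕ) : ℚ) ^ 2 / 2
      - ((e + 4 : ℕ) : ℚ) * (2 * (r : ℚ) + 3) / 2
      + 6 * 2 ^ r + ((r : ℚ) + 1) * ((r : ℚ) + 2) / 2 := by
  induction e using Nat.strong_induction_on with
  | _ e IH =>
    intro r h1 h2
    by_cases hbot : e + 4 = 3 * 2 ^ r + r + 1
    · match r with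
      | 0 =>
        have he : e = 0 := by omega
        subst he
        have hb : bFun 4 = 9 := by decide
        rw [hb]
        norm_num
      | s + 1 =>
        have hps : 1 ≤ 2 ^ s := Nat.one_le_two_pow
        have hpow : (2 : ℕ) ^ (s + 1) = 2 * 2 ^ s := by ring
        have he1 : 1 ≤ e := by omega
        obtain ⟨e', rfl⟩ : ∃ e', e = e' + 1 := ⟨e - 1, by omega⟩
        have hIH := IH e' (by omega) s (by omega) (by omega)
        have hrec := bFun_succ (e' + 2)
        have ha := aSeq_eq s (e' + 3) (by omega) (by omega)
        have haq : (aSeq (e' + 3) : ℚ) = (e' : ℚ) + 3 - (s : ℚ) := by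
          have := congrArg (fun x : ℕ => (x : ℚ)) ha
          push_cast at this
          linarith
        have heq : (e' : ℚ) = 6 * 2 ^ s + s - 3 := by
          have : e' + 3 = 6 * 2 ^ s + s := by omega
          have := congrArg (fun x : ℕ => (x : ℚ)) this
          push_cast at this
          linarith
        rw [show e' + 1 + 4 = e' + 2 + 3 from rfl, hrec]
        push_cast
        push_cast at hIH
        linear_combination hIH + haq + heq
    · have hx : r < 2 ^ r := Nat.lt_two_pow_self
      have he1 : 1 ≤ e := by
        by_contra hc
        have : e = 0 := by omega
        subst this
        have : 2 ^ r = 1 ∧ r = 0 := by omega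
        obtain ⟨h5, h6⟩ := this
        subst h6
        omega
      obtain ⟨e', rfl⟩ : ∃ e', e = e' + 1 := ⟨e - 1, by omega⟩
      have hIH := IH e' (by omega) r (by omega) (by omega)
      have hrec := bFun_succ (e' + 2)
      have ha := aSeq_eq r (e' + 3) (by omega) (by omega)
      have haq : (aSeq (e' + 3) : ℚ) = (e' : ℚ) + 3 - (r : ℚ) := by
        have := congrArg (fun x : ℕ => (x : ℚ)) ha
        push_cast at this
        linarith
      rw [show e' + 1 + 4 = e' + 2 + 3 from rfl, hrec]
      push_cast
      push_cast at hIH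
      linear_combination hIH + haq

lemma exists_r (d : ℕ) (hd : 4 ≤ d) :
    ∃ r : ℕ, 3 * 2 ^ r + r + 1 ≤ d ∧ d ≤ 3 * 2 ^ (r + 1) + r + 1 := by
  induction d, hd using Nat.le_induction with
  | base => exact ⟨0, by norm_num⟩
  | succ d hd ih =>
    obtain ⟨r, hr1, hr2⟩ := ih
    by_cases h : d + 1 ≤ 3 * 2 ^ (r + 1) + r + 1
    · exact ⟨r, by omega, h⟩
    · refine ⟨r + 1, by omega, ?_⟩
      have := Nat.pow_le_pow_right (by norm_num : 1 ≤ 2) (show r + 1 ≤ r + 2 by omega)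
      omega

theorem b_closed_formula (d : ℕ) (hd : 4 ≤ d) :
    (∃! r : ℕ, 3 * 2 ^ r + r + 1 ≤ d ∧ d ≤ 3 * 2 ^ (r + 1) + r + 1) ∧
    (∀ r : ℕ, 3 * 2 ^ r + r + 1 ≤ d → d ≤ 3 * 2 ^ (r + 1) + r + 1 →
      (bFun d : ℚ) = (d : ℚ) ^ 2 / 2 - (d : ℚ) * (2 * (r : ℚ) + 3) / 2
        + 6 * 2 ^ r + ((r : ℚ) + 1) * ((r : ℚ) + 2) / 2) := by
  constructor
  · obtain ⟨r, hr⟩ := exists_r d hd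
    refine ⟨r, hr, ?_⟩
    intro s ⟨hs1, hs2⟩
    by_contra hne
    rcases Nat.lt_or_ge s r with h | h
    · have := mono3 (show s + 1 ≤ r from h)
      omega
    · have hlt : r < s := by omega
      have := mono3 (show r + 1 ≤ s from hlt)
      omega
  · intro r h1 h2
    obtain ⟨e, rfl⟩ : ∃ e, d = e + 4 := ⟨d - 4, by omega⟩
    exact key e r h1 h2
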